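/- For the Liouville reduction map φ(v₀,...,v₄) = (v₁,...,v₄, v₂v₃/(1+v₀) - 1), the function B = (v₀+v₂+1)(v₁+v₃+1)/((v₀+1)(v₃+1)) is a 3-integral: B∘φ∘φ∘φ = B, with B∘φ = (v₁+v₃+1)(v₂+v₄+1)/((v₁+1)(v₄+1)) and B∘φ∘φ = (v₀+v₂+1)(v₂+v₄+1)/(v₂(v₂+1)). Consequently I₃ = B·(B∘φ)·(B∘φ∘φ) and I₄ = B + B∘φ + B∘φ∘φ are integrals of φ. -/
import Mathlib


/-- For the (3,-2) Liouville reduction, B is a 3-integral: B∘φ³ = B, with the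
explicit forms of B∘φ and B∘φ², and consequently both the product and the sum
of B, B∘φ, B∘φ² are integrals of φ. -/
theorem liouville_B_three_integral (v0 v1 v2 v3 v4 : ℝ)
    (h0 : v0 + 1 ≠ 0) (h1 : v1 + 1 ≠ 0) (h2 : v2 ≠ 0) (h2' : v2 + 1 ≠ 0)
    (h3 : v3 ≠ 0) (h3' : v3 + 1 ≠ 0) (h4 : v4 ≠ 0) (h4' : v4 + 1 ≠ 0)
    (v5 v6 v7 : ℝ)
    (hv5 : v5 = v2 * v3 / (1 + v0) - 1)
    (hv6 : v6 = v3 * v4 / (1 + v1) - 1)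
    (hv7 : v7 = v4 * v5 / (1 + v2) - 1) :
    -- B∘φ has the stated form
    ((v1 + v3 + 1) * (v2 + v4 + 1) / ((v1 + 1) * (v4 + 1))
        = (v1 + v3 + 1) * (v2 + v4 + 1) / ((v1 + 1) * (v4 + 1)))
    -- B∘φ∘φ has the stated form
    ∧ ((v2 + v4 + 1) * (v3 + v5 + 1) / ((v2 + 1) * (v5 + 1))
        = (v0 + v2 + 1) * (v2 + v4 + 1) / (v2 * (v2 + 1)))
    -- B is a 3-integral: B∘φ∘φ∘φ = B
    ∧ ((v3 + v5 + 1) * (v4 + v6 + 1) / ((v3 + 1) * (v6 + 1))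
        = (v0 + v2 + 1) * (v1 + v3 + 1) / ((v0 + 1) * (v3 + 1)))
    -- I₃ = B·(B∘φ)·(B∘φ∘φ) is an integral
    ∧ (((v1 + v3 + 1) * (v2 + v4 + 1) / ((v1 + 1) * (v4 + 1))) *
         ((v2 + v4 + 1) * (v3 + v5 + 1) / ((v2 + 1) * (v5 + 1))) *
         ((v3 + v5 + 1) * (v4 + v6 + 1) / ((v3 + 1) * (v6 + 1)))
        = ((v0 + v2 + 1) * (v1 + v3 + 1) / ((v0 + 1) * (v3 + 1))) *
          ((v1 + v3 + 1) * (v2 + v4 + 1) / ((v1 + 1) * (v4 + 1))) *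
          ((v2 + v4 + 1) * (v3 + v5 + 1) / ((v2 + 1) * (v5 + 1))))
    -- I₄ = B + B∘φ + B∘φ∘φ is an integral
    ∧ (((v1 + v3 + 1) * (v2 + v4 + 1) / ((v1 + 1) * (v4 + 1))) +
         ((v2 + v4 + 1) * (v3 + v5 + 1) / ((v2 + 1) * (v5 + 1))) +
         ((v3 + v5 + 1) * (v4 + v6 + 1) / ((v3 + 1) * (v6 + 1)))
        = ((v0 + v2 + 1) * (v1 + v3 + 1) / ((v0 + 1) * (v3 + 1))) +
          ((v1 + v3 + 1) * (v2 + v4 + 1) / ((v1 + 1) * (v4 + 1))) +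
          ((v2 + v4 + 1) * (v3 + v5 + 1) / ((v2 + 1) * (v5 + 1)))) := by

  have h0' : (1:ℝ) + v0 ≠ 0 := by rwa [add_comm] at h0
  have h1' : (1:ℝ) + v1 ≠ 0 := by rwa [add_comm] at h1
  have hv5' : v5 + 1 = v2 * v3 / (1 + v0) := by rw [hv5]; ring
  have hv6' : v6 + 1 = v3 * v4 / (1 + v1) := by rw [hv6]; ring
  have h5 : v5 + 1 ≠ 0 := by rw [hv5']; exact div_ne_zero (mul_ne_zero h2 h3) h0'
  have h6 : v6 + 1 ≠ 0 := by rw [hv6']; exact div_ne_zero (mul_ne_zero h3 h4) h1'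
  have e5 : v5 * (1 + v0) = v2 * v3 - (1 + v0) := by
    rw [hv5]; field_simp
  have e6 : v6 * (1 + v1) = v3 * v4 - (1 + v1) := by
    rw [hv6]; field_simp
  have eq2 : (v2 + v4 + 1) * (v3 + v5 + 1) / ((v2 + 1) * (v5 + 1))
      = (v0 + v2 + 1) * (v2 + v4 + 1) / (v2 * (v2 + 1)) := by
    rw [div_eq_div_iff (mul_ne_zero h2' h5) (mul_ne_zero h2 h2'), hv5]
    field_simp
    ring
  have eq3 : (v3 + v5 + 1) * (v4 + v6 + 1) / ((v3 + 1) * (v6 + 1))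
      = (v0 + v2 + 1) * (v1 + v3 + 1) / ((v0 + 1) * (v3 + 1)) := by
    rw [div_eq_div_iff (mul_ne_zero h3' h6) (mul_ne_zero h0 h3'), hv5, hv6]
    field_simp
    ring
  exact ⟨rfl, eq2, eq3, by rw [eq2, eq3]; ring, by rw [eq2, eq3]; ring⟩
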